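/- arXiv:math/9204221 — 2 statements merged into one kernel-verified Lean document; each statement's English description precedes it below -/
import Mathlib

section
/- Let M be a smooth manifold, let c : ℝ → M be a smooth curve with c(0) = x, and let k ≥ 1. Assume that, writing c in the preferred extended chart of M at x, the curve t ↦ (extChart_x)(c(t)) has vanishing j-th derivative at t = 0 for all 1 ≤ j ≤ k−1. Then there exists a tangent vector v ∈ T_xM such that for every smooth function f : M → ℝ one has (d^k/dt^k)|_{t=0} f(c(t)) = (df)_x(v), where (df)_x denotes the differential (mfderiv) of f at x. -/
open scoped Manifold
open Set Function

noncomputable section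

variable {E : Type*} [NormedAddCommGroup E] [NormedSpace ℝ E]
  {H : Type*} [TopologicalSpace H]

instance {M : Type*} [TopologicalSpace M] [ChartedSpace H M] {I : ModelWithCorners ℝ E H}
    {x : M} : NormedAddCommGroup (TangentSpace I x) :=
  inferInstanceAs (NormedAddCommGroup E)

instance {M : Type*} [TopologicalSpace M] [ChartedSpace H M] {I : ModelWithCorners ℝ E H}
    {x : M} : NormedSpace ℝ (TangentSpace I x) :=
  inferInstanceAs (NormedSpace ℝ E)

/-- The differential `(df)_x(v)` of a real valued function `f` at `x`,
applied to a tangent vector `v`, as a real number. -/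
def dApply (I : ModelWithCorners ℝ E H) {M : Type*} [TopologicalSpace M] [ChartedSpace H M]
    (f : M → ℝ) (x : M) (v : TangentSpace I x) : ℝ :=
  mfderiv I 𝓘(ℝ, ℝ) f x v

/-- A vector field is smooth if it is a smooth section of the tangent bundle. -/
def IsSmoothVectorField (I : ModelWithCorners ℝ E H) {M : Type*} [TopologicalSpace M]
    [ChartedSpace H M] [IsManifold I ((⊤ : ℕ∞) : WithTop ℕ∞) M] (X : ∀ x : M, TangentSpace I x) : Prop :=
  ContMDiff I I.tangent (⊤ : ℕ∞) (fun x => (⟨x, X x⟩ : TangentBundle I M))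

/-- The pullback of a vector field under a map between manifolds, within a set
(Mathlib's `mpullbackWithin`). -/
def mpullbackWithin (I : ModelWithCorners ℝ E H) {E' : Type*} [NormedAddCommGroup E']
    [NormedSpace ℝ E'] {H' : Type*} [TopologicalSpace H'] (I' : ModelWithCorners ℝ E' H')
    {M : Type*} [TopologicalSpace M] [ChartedSpace H M]
    {M' : Type*} [TopologicalSpace M'] [ChartedSpace H' M']
    (f : M → M') (V : ∀ x : M', TangentSpace I' x) (s : Set M) (x : M) :
    TangentSpace I x :=
  (mfderivWithin I I' f s x).inverse (V (f x))

/-- The pullback of a vector field under a map between manifolds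
(Mathlib's `mpullback`): `x ↦ (T_x f)⁻¹ (V (f x))`. -/
def mpullback (I : ModelWithCorners ℝ E H) {E' : Type*} [NormedAddCommGroup E']
    [NormedSpace ℝ E'] {H' : Type*} [TopologicalSpace H'] (I' : ModelWithCorners ℝ E' H')
    {M : Type*} [TopologicalSpace M] [ChartedSpace H M]
    {M' : Type*} [TopologicalSpace M'] [ChartedSpace H' M']
    (f : M → M') (V : ∀ x : M', TangentSpace I' x) (x : M) :
    TangentSpace I x :=
  (mfderiv I I' f x).inverse (V (f x))

/-- The Lie bracket of two vector fields on a manifold (Mathlib's `mlieBracket` convention: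
`[X,Y] = X(Y) - Y(X)`), defined by pulling the vector fields back to the model space via the
preferred chart and taking the Lie bracket of vector fields there. -/
def mlieBracket (I : ModelWithCorners ℝ E H) {M : Type*} [TopologicalSpace M] [ChartedSpace H M]
    (V W : ∀ x : M, TangentSpace I x) (x₀ : M) : TangentSpace I x₀ :=
  mpullback I 𝓘(ℝ, E) (extChartAt I x₀)
    (VectorField.lieBracketWithin ℝ
      (mpullbackWithin 𝓘(ℝ, E) I (extChartAt I x₀).symm V (Set.range I))
      (mpullbackWithin 𝓘(ℝ, E) I (extChartAt I x₀).symm W (Set.range I))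
      (Set.range I)) x₀

/-- A smooth curve of diffeomorphisms through the identity on `M`: a jointly smooth map
`φ : ℝ × M → M` with `φ 0 = id`, each `φ t` bijective, with jointly smooth inverse. -/
structure DiffeoCurve (I : ModelWithCorners ℝ E H) (M : Type*) [TopologicalSpace M]
    [ChartedSpace H M] [IsManifold I ((⊤ : ℕ∞) : WithTop ℕ∞) M] where
  toFun : ℝ → M → M
  invFun : ℝ → M → M
  smooth_toFun : ContMDiff (𝓘(ℝ, ℝ).prod I) I (⊤ : ℕ∞) fun p : ℝ × M => toFun p.1 p.2
  smooth_invFun : ContMDiff (𝓘(ℝ, ℝ).prod I) I (⊤ : ℕ∞) fun p : ℝ × M => invFun p.1 p.2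
  toFun_zero : ∀ x, toFun 0 x = x
  left_inv : ∀ t x, invFun t (toFun t x) = x
  right_inv : ∀ t x, toFun t (invFun t x) = x

/-- `φ` has first non-vanishing derivative `k! • X` at `0`: for every point `x` and smooth
`f : M → ℝ`, the `j`-th derivative of `t ↦ f (φ_t x)` at `0` vanishes for `1 ≤ j ≤ k-1`, and the
`k`-th derivative equals `k! * (df)_x (X x)`. -/
def HasFirstNonvanishingDeriv {I : ModelWithCorners ℝ E H} {M : Type*} [TopologicalSpace M]
    [ChartedSpace H M] [IsManifold I ((⊤ : ℕ∞) : WithTop ℕ∞) M] (φ : DiffeoCurve I M) (k : ℕ)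
    (X : ∀ x : M, TangentSpace I x) : Prop :=
  ∀ (x : M) (f : M → ℝ), ContMDiff I 𝓘(ℝ, ℝ) (⊤ : ℕ∞) f →
    (∀ j : ℕ, 1 ≤ j → j < k → iteratedDeriv j (fun t => f (φ.toFun t x)) 0 = 0) ∧
    iteratedDeriv k (fun t => f (φ.toFun t x)) 0 = (k.factorial : ℝ) * dApply I f x (X x)

/-- The commutator `(α, β) ↦ β⁻¹ ∘ α⁻¹ ∘ β ∘ α` on pairs (curve, inverse curve). -/
def commOp {M : Type*} (p q : (ℝ → M → M) × (ℝ → M → M)) : (ℝ → M → M) × (ℝ → M → M) :=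
  (fun t x => q.2 t (p.2 t (q.1 t (p.1 t x))),
   fun t x => p.2 t (q.2 t (p.1 t (q.1 t x))))

namespace KDerivAux

/-- The ordered finpartition of `Fin k` with a single block. -/
def oneBlock (k : ℕ) (hk : 0 < k) : OrderedFinpartition k where
  length := 1
  partSize := fun _ => k
  partSize_pos := fun _ => hk
  emb := fun _ => id
  emb_strictMono := fun _ => strictMono_id
  parts_strictMono := Subsingleton.strictMono _
  disjoint := fun m _ m' _ h => absurd (Subsingleton.elim m m') h
  cover := fun x => ⟨0, x, rfl⟩

lemma sum_partSize {k : ℕ} (c : OrderedFinpartition k) :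
    ∑ m, c.partSize m = k := by
  have := c.sum_sigma_eq_sum (fun _ => (1 : ℕ))
  simpa using this

lemma eq_oneBlock {k : ℕ} (hk : 0 < k) (c : OrderedFinpartition k)
    (hc : c.length = 1) : c = oneBlock k hk := by
  obtain ⟨L, ps, pos, emb, hmono, hparts, hdisj, hcov⟩ := c
  dsimp at hc
  subst hc
  have hps : ps = fun _ => k := by
    funext m
    have hsum : ∑ m', ps m' = k := sum_partSize ⟨1, ps, pos, emb, hmono, hparts, hdisj, hcov⟩
    rw [← hsum]
    rw [Subsingleton.elim m 0, Fin.sum_univ_one]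
  subst hps
  have hemb : emb = fun _ => id := by
    funext m j
    have hsurj : Surjective (emb m) := by
      intro y
      obtain ⟨m', r, hr⟩ := hcov y
      exact ⟨r, by rw [Subsingleton.elim m m']; exact hr⟩
    have : emb m = id := by
      apply ((hmono m).range_inj strictMono_id).mp
      simp [hsurj.range_eq]
    exact congrFun this j
  subst hemb
  rfl

lemma key {E F : Type*} [NormedAddCommGroup E] [NormedSpace ℝ E]
    [NormedAddCommGroup F] [NormedSpace ℝ F]
    {γ : ℝ → E} {g : E → F} {s : Set ℝ} {t : Set E} {k : ℕ}
    (hk : 1 ≤ k) (hs : IsOpen s) (ht : IsOpen t) (h0 : (0:ℝ) ∈ s)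
    (hγ : ContDiffOn ℝ k γ s) (hg : ContDiffOn ℝ k g t) (hmaps : Set.MapsTo γ s t)
    (hvanish : ∀ j, 1 ≤ j → j < k → iteratedDeriv j γ 0 = 0) :
    iteratedDeriv k (g ∘ γ) 0 = fderiv ℝ g (γ 0) (iteratedDeriv k γ 0) := by
  have hus : UniqueDiffOn ℝ s := hs.uniqueDiffOn
  have hut : UniqueDiffOn ℝ t := ht.uniqueDiffOn
  have hP := hγ.ftaylorSeriesWithin hus
  have hQ := hg.ftaylorSeriesWithin hut
  have hcomp := hQ.comp hP hmaps
  set P := ftaylorSeriesWithin ℝ γ s with hPdef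
  set Q := ftaylorSeriesWithin ℝ g t with hQdef
  have hPj : ∀ j : ℕ, P 0 j = iteratedFDeriv ℝ j γ 0 := fun j =>
    iteratedFDerivWithin_of_isOpen j hs h0
  have hPzero : ∀ j, 1 ≤ j → j < k → P 0 j = 0 := by
    intro j h1 h2
    rw [hPj]
    ext v
    rw [iteratedFDeriv_apply_eq_iteratedDeriv_mul_prod, hvanish j h1 h2, smul_zero]
    simp
  have hPk : P 0 k (fun _ => (1:ℝ)) = iteratedDeriv k γ 0 := by
    rw [hPj, ← iteratedDeriv_eq_iteratedFDeriv]
  have hQ1 : ∀ w : E, Q (γ 0) 1 (fun _ => w) = fderiv ℝ g (γ 0) w := by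
    intro w
    have h1 : Q (γ 0) 1 (fun _ => w)
        = fderivWithin ℝ g t (γ 0) w :=
      iteratedFDerivWithin_one_apply (hut _ (hmaps h0)) _
    rw [h1, fderivWithin_of_isOpen ht (hmaps h0)]
  have hk0 : 0 < k := hk
  have hmain : iteratedFDerivWithin ℝ k (g ∘ γ) s 0
      = (Q (γ 0)).taylorComp (P 0) k :=
    (hcomp.eq_iteratedFDerivWithin_of_uniqueDiffOn (mod_cast le_rfl) hus h0).symm
  have hstep : iteratedDeriv k (g ∘ γ) 0
      = ((Q (γ 0)).taylorComp (P 0) k) (fun _ => (1:ℝ)) := by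
    rw [iteratedDeriv_eq_iteratedFDeriv, ← iteratedFDerivWithin_of_isOpen k hs h0, hmain]
  rw [hstep]
  have hsum : ((Q (γ 0)).taylorComp (P 0) k) (fun _ => (1:ℝ))
      = ∑ c : OrderedFinpartition k,
          ((Q (γ 0)).compAlongOrderedFinpartition (P 0) c) (fun _ => (1:ℝ)) := by
    rw [FormalMultilinearSeries.taylorComp, ContinuousMultilinearMap.sum_apply]
  rw [hsum]
  rw [Finset.sum_eq_single_of_mem (oneBlock k hk0) (Finset.mem_univ _) ?vanish]
  case vanish =>
    intro c _ hne
    have hlen1 : c.length ≠ 1 := fun h => hne (eq_oneBlock hk0 c h)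
    have hlenpos : 0 < c.length := c.length_pos hk0
    have hlen2 : 2 ≤ c.length := by omega
    -- every part has size < k
    have hlt : ∀ m : Fin c.length, c.partSize m < k := by
      intro m
      haveI : Nontrivial (Fin c.length) := Fin.nontrivial_iff_two_le.mpr hlen2
      obtain ⟨m', hm'⟩ := exists_ne m
      calc c.partSize m < ∑ i, c.partSize i := by
            refine Finset.single_lt_sum hm' (Finset.mem_univ _) (Finset.mem_univ _)
              (c.partSize_pos m') (fun _ _ _ => Nat.zero_le _)
        _ = k := sum_partSize c
    rw [FormalMultilinearSeries.compAlongOrderedFinpartition_apply]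
    apply ContinuousMultilinearMap.map_coord_zero _ (⟨0, hlenpos⟩ : Fin c.length)
    rw [OrderedFinpartition.applyOrderedFinpartition_apply]
    dsimp only
    rw [hPzero _ (c.partSize_pos _) (hlt _)]
    simp
  · rw [FormalMultilinearSeries.compAlongOrderedFinpartition_apply]
    have hvec : (oneBlock k hk0).applyOrderedFinpartition
        (fun m => P 0 ((oneBlock k hk0).partSize m)) (fun _ => (1:ℝ))
        = fun _ => iteratedDeriv k γ 0 := by
      rw [OrderedFinpartition.applyOrderedFinpartition_apply]
      funext m
      exact hPk
    rw [hvec]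
    exact hQ1 _

end KDerivAux

/-- If `c : ℝ → M` is a smooth curve with `c 0 = x` whose expression in the
preferred extended chart at `x` has vanishing derivatives at `0` of orders `1,…,k-1`, then
there is a tangent vector `v ∈ T_x M` such that for every smooth `f : M → ℝ` the `k`-th
derivative of `t ↦ f (c t)` at `0` equals `(df)_x v`. -/
theorem kth_deriv_eq_tangent_vector
    {E : Type*} [NormedAddCommGroup E] [NormedSpace ℝ E] [FiniteDimensional ℝ E]
    {H : Type*} [TopologicalSpace H] {I : ModelWithCorners ℝ E H} [I.Boundaryless]
    {M : Type*} [TopologicalSpace M] [ChartedSpace H M] [IsManifold I ((⊤ : ℕ∞) : WithTop ℕ∞) M]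
    (c : ℝ → M) (hc : ContMDiff 𝓘(ℝ, ℝ) I (⊤ : ℕ∞) c) (x : M) (hcx : c 0 = x)
    (k : ℕ) (hk : 1 ≤ k)
    (hvanish : ∀ j : ℕ, 1 ≤ j → j < k →
      iteratedDeriv j (fun t => extChartAt I x (c t)) 0 = 0) :
    ∃ v : TangentSpace I x, ∀ f : M → ℝ, ContMDiff I 𝓘(ℝ, ℝ) (⊤ : ℕ∞) f →
      iteratedDeriv k (fun t => f (c t)) 0 = dApply I f x v := by
  set e := extChartAt I x with he
  set γ : ℝ → E := fun t => e (c t) with hγdef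
  set s : Set ℝ := c ⁻¹' e.source with hsdef
  have hs : IsOpen s := (isOpen_extChartAt_source x).preimage hc.continuous
  have h0 : (0:ℝ) ∈ s := by
    show c 0 ∈ e.source
    rw [hcx]; exact mem_extChartAt_source x
  have ht : IsOpen e.target := isOpen_extChartAt_target x
  have hγ : ContDiffOn ℝ k γ s := by
    have h1 : ContMDiffOn 𝓘(ℝ, ℝ) 𝓘(ℝ, E) ((⊤ : ℕ∞) : WithTop ℕ∞) γ s := by
      apply (contMDiffOn_extChartAt (n := ((⊤ : ℕ∞) : WithTop ℕ∞))).comp hc.contMDiffOn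
      intro t' ht'
      rw [← extChartAt_source I]; exact ht'
    exact h1.contDiffOn.of_le (by exact_mod_cast le_top)
  have hmaps : Set.MapsTo γ s e.target := fun t' ht' => e.map_source ht'
  refine ⟨iteratedDeriv k γ 0, fun f hf => ?_⟩
  set g : E → ℝ := fun y => f (e.symm y) with hgdef
  have hg : ContDiffOn ℝ k g e.target := by
    have h1 : ContMDiffOn 𝓘(ℝ, E) 𝓘(ℝ, ℝ) ((⊤ : ℕ∞) : WithTop ℕ∞) g e.target :=
      (hf.contMDiffOn (s := univ)).comp (contMDiffOn_extChartAt_symm x)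
        (fun y _ => Set.mem_univ _)
    exact h1.contDiffOn.of_le (by exact_mod_cast le_top)
  have heq : (fun t => f (c t)) =ᶠ[nhds (0:ℝ)] (g ∘ γ) := by
    filter_upwards [hs.mem_nhds h0] with t' ht'
    show f (c t') = f (e.symm (e (c t')))
    rw [e.left_inv ht']
  rw [heq.iteratedDeriv_eq k]
  rw [KDerivAux.key hk hs ht h0 hγ hg hmaps hvanish]
  have hγ0 : γ 0 = e x := by rw [hγdef]; simp [hcx]
  have hmdiff : MDifferentiableAt I 𝓘(ℝ, ℝ) f x :=
    hf.mdifferentiableAt (by simp)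
  have hw : writtenInExtChartAt I 𝓘(ℝ, ℝ) x f = g := by
    funext y
    simp only [writtenInExtChartAt, extChartAt_model_space_eq_id, PartialEquiv.refl_coe,
      Function.comp_apply, id_eq]
    rfl
  show _ = mfderiv I 𝓘(ℝ, ℝ) f x (iteratedDeriv k γ 0)
  rw [hγ0, hmdiff.mfderiv, ModelWithCorners.Boundaryless.range_eq_univ,
    fderivWithin_univ, hw, ← he]
  rfl
end
end

section
/- Let M be a smooth manifold, let φ be a smooth curve of diffeomorphisms through the identity on M, let k ≥ 1, and let X be a smooth vector field on M such that φ has first non-vanishing derivative k!·X at 0. Then the inverse curve t ↦ φ_t^{-1} has first non-vanishing derivative −k!·X at 0; that is, for every smooth f : M → ℝ and every x ∈ M, the j-th derivative of t ↦ f(φ_t^{-1}(x)) at t = 0 vanishes for 1 ≤ j ≤ k−1, and its k-th derivative at t = 0 equals −k!·(df)_x(X(x)). -/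
open scoped Manifold
open Set Function


namespace InvCurveAux

noncomputable def DD (v : ℝ × ℝ) (G : ℝ × ℝ → ℝ) : ℝ × ℝ → ℝ :=
  fun p => fderiv ℝ G p v

lemma contDiff_fderiv {G : ℝ × ℝ → ℝ} (hG : ContDiff ℝ (⊤ : ℕ∞) G) :
    ContDiff ℝ (⊤ : ℕ∞) (fderiv ℝ G) :=
  hG.fderiv_right (by exact_mod_cast le_top)

lemma contDiff_DD {G : ℝ × ℝ → ℝ} (hG : ContDiff ℝ (⊤ : ℕ∞) G) (v : ℝ × ℝ) :
    ContDiff ℝ (⊤ : ℕ∞) (DD v G) :=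
  (ContinuousLinearMap.apply ℝ ℝ v).contDiff.comp (contDiff_fderiv hG)

lemma DD_apply_eq {G : ℝ × ℝ → ℝ} (hG : ContDiff ℝ (⊤ : ℕ∞) G) (v w : ℝ × ℝ) (p : ℝ × ℝ) :
    DD v (DD w G) p = fderiv ℝ (fderiv ℝ G) p v w := by
  have h2 : HasFDerivAt (fderiv ℝ G) (fderiv ℝ (fderiv ℝ G) p) p :=
    (((contDiff_fderiv hG).differentiable (by simp)) p).hasFDerivAt
  have hcomp : HasFDerivAt (DD w G)
      ((ContinuousLinearMap.apply ℝ ℝ w).comp (fderiv ℝ (fderiv ℝ G) p)) p :=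
    (ContinuousLinearMap.apply ℝ ℝ w).hasFDerivAt.comp p h2
  simp only [DD, hcomp.fderiv]
  rfl

lemma DD_comm {G : ℝ × ℝ → ℝ} (hG : ContDiff ℝ (⊤ : ℕ∞) G) (v w : ℝ × ℝ) :
    DD v (DD w G) = DD w (DD v G) := by
  funext p
  rw [DD_apply_eq hG v w p, DD_apply_eq hG w v p]
  have hd : ∀ y, HasFDerivAt G (fderiv ℝ G y) y := fun y =>
    ((hG.differentiable (by simp)) y).hasFDerivAt
  have h2 : HasFDerivAt (fderiv ℝ G) (fderiv ℝ (fderiv ℝ G) p) p :=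
    (((contDiff_fderiv hG).differentiable (by simp)) p).hasFDerivAt
  exact second_derivative_symmetric hd h2 v w

noncomputable def opl : List (ℝ × ℝ) → (ℝ × ℝ → ℝ) → (ℝ × ℝ → ℝ)
  | [], G => G
  | v :: l, G => DD v (opl l G)

lemma contDiff_opl {G : ℝ × ℝ → ℝ} (hG : ContDiff ℝ (⊤ : ℕ∞) G) :
    ∀ l : List (ℝ × ℝ), ContDiff ℝ (⊤ : ℕ∞) (opl l G)
  | [] => hG
  | v :: l => contDiff_DD (contDiff_opl hG l) v

lemma opl_append (l₁ l₂ : List (ℝ × ℝ)) (G : ℝ × ℝ → ℝ) :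
    opl (l₁ ++ l₂) G = opl l₁ (opl l₂ G) := by
  induction l₁ with
  | nil => rfl
  | cons v l ih => simp [opl, ih]

lemma opl_perm {G : ℝ × ℝ → ℝ} (hG : ContDiff ℝ (⊤ : ℕ∞) G) {l l' : List (ℝ × ℝ)}
    (h : l.Perm l') : opl l G = opl l' G := by
  induction h with
  | nil => rfl
  | cons a _ ih => simp only [opl, ih]
  | swap a b l => exact DD_comm (contDiff_opl hG l) b a
  | trans _ _ ih1 ih2 => rw [ih1, ih2]

lemma iteratedFDeriv_eq_opl :
    ∀ (n : ℕ) {G : ℝ × ℝ → ℝ}, ContDiff ℝ (⊤ : ℕ∞) G → ∀ (v : Fin n → ℝ × ℝ) (x : ℝ × ℝ),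
      iteratedFDeriv ℝ n G x v = opl (List.ofFn v) G x := by
  intro n
  induction n with
  | zero =>
    intro G hG v x
    simp [opl, iteratedFDeriv_zero_apply]
  | succ n ih =>
    intro G hG v x
    rw [iteratedFDeriv_succ_apply_right]
    have h2 : iteratedFDeriv ℝ n (DD (v (Fin.last n)) G) x (Fin.init v)
        = (iteratedFDeriv ℝ n (fderiv ℝ G) x (Fin.init v)) (v (Fin.last n)) := by
      have hcl := (ContinuousLinearMap.apply ℝ ℝ (v (Fin.last n))).iteratedFDeriv_comp_left
        ((contDiff_fderiv hG).contDiffAt (x := x)) (i := n) (by exact_mod_cast le_top)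
      have heq : (⇑(ContinuousLinearMap.apply ℝ ℝ (v (Fin.last n))) ∘ fderiv ℝ G)
          = DD (v (Fin.last n)) G := rfl
      rw [heq] at hcl
      rw [hcl]
      rfl
    rw [← h2, ih (contDiff_DD hG _) (Fin.init v) x]
    have hl : List.ofFn v = List.ofFn (Fin.init v) ++ [v (Fin.last n)] := by
      rw [List.ofFn_succ']
      simp only [List.concat_eq_append]
      rfl
    rw [hl, opl_append]
    rfl

lemma DD_e2 {G : ℝ × ℝ → ℝ} (hG : ContDiff ℝ (⊤ : ℕ∞) G) (p : ℝ × ℝ) :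
    DD ((0 : ℝ), (1 : ℝ)) G p = deriv (fun s => G (p.1, s)) p.2 := by
  have hc : HasDerivAt (fun s : ℝ => ((p.1, s) : ℝ × ℝ)) (((0 : ℝ), (1 : ℝ)) : ℝ × ℝ) p.2 :=
    HasDerivAt.prodMk (hasDerivAt_const p.2 p.1) (hasDerivAt_id p.2)
  have hG' : HasFDerivAt G (fderiv ℝ G (p.1, p.2)) (p.1, p.2) :=
    ((hG.differentiable (by simp)) (p.1, p.2)).hasFDerivAt
  have h := hG'.comp_hasDerivAt p.2 hc
  rw [show (fun s => G (p.1, s)) = G ∘ Prod.mk p.1 from rfl, h.deriv]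
  simp [DD]

lemma DD_e1 {G : ℝ × ℝ → ℝ} (hG : ContDiff ℝ (⊤ : ℕ∞) G) (p : ℝ × ℝ) :
    DD ((1 : ℝ), (0 : ℝ)) G p = deriv (fun u => G (u, p.2)) p.1 := by
  have hc : HasDerivAt (fun u : ℝ => ((u, p.2) : ℝ × ℝ)) (((1 : ℝ), (0 : ℝ)) : ℝ × ℝ) p.1 :=
    HasDerivAt.prodMk (hasDerivAt_id p.1) (hasDerivAt_const p.1 p.2)
  have hG' : HasFDerivAt G (fderiv ℝ G (p.1, p.2)) (p.1, p.2) :=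
    ((hG.differentiable (by simp)) (p.1, p.2)).hasFDerivAt
  have h := hG'.comp_hasDerivAt p.1 hc
  rw [show (fun u => G (u, p.2)) = G ∘ (fun u => (u, p.2)) from rfl, h.deriv]
  simp [DD]

lemma opl_replicate_e2 {G : ℝ × ℝ → ℝ} (hG : ContDiff ℝ (⊤ : ℕ∞) G) :
    ∀ (b : ℕ) (p : ℝ × ℝ),
      opl (List.replicate b ((0 : ℝ), (1 : ℝ))) G p = iteratedDeriv b (fun s => G (p.1, s)) p.2 := by
  intro b
  induction b with
  | zero => intro p; simp [opl, iteratedDeriv_zero]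
  | succ b ih =>
    intro p
    have hH := contDiff_opl hG (List.replicate b ((0 : ℝ), (1 : ℝ)))
    show DD ((0 : ℝ), (1 : ℝ)) (opl (List.replicate b ((0 : ℝ), (1 : ℝ))) G) p = _
    rw [DD_e2 hH]
    have heq : (fun s => opl (List.replicate b ((0 : ℝ), (1 : ℝ))) G (p.1, s))
        = fun s => iteratedDeriv b (fun s' => G (p.1, s')) s := by
      funext s; exact ih (p.1, s)
    rw [heq, ← iteratedDeriv_succ]

lemma opl_replicate_e1 {G : ℝ × ℝ → ℝ} (hG : ContDiff ℝ (⊤ : ℕ∞) G) :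
    ∀ (a : ℕ) (p : ℝ × ℝ),
      opl (List.replicate a ((1 : ℝ), (0 : ℝ))) G p = iteratedDeriv a (fun u => G (u, p.2)) p.1 := by
  intro a
  induction a with
  | zero => intro p; simp [opl, iteratedDeriv_zero]
  | succ a ih =>
    intro p
    have hH := contDiff_opl hG (List.replicate a ((1 : ℝ), (0 : ℝ)))
    show DD ((1 : ℝ), (0 : ℝ)) (opl (List.replicate a ((1 : ℝ), (0 : ℝ))) G) p = _
    rw [DD_e1 hH]
    have heq : (fun u => opl (List.replicate a ((1 : ℝ), (0 : ℝ))) G (u, p.2))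
        = fun u => iteratedDeriv a (fun u' => G (u', p.2)) u := by
      funext u; exact ih (u, p.2)
    rw [heq, ← iteratedDeriv_succ]

lemma e1_ne_e2 : ((1 : ℝ), (0 : ℝ)) ≠ ((0 : ℝ), (1 : ℝ)) := by
  simp [Prod.ext_iff]

lemma sort_perm : ∀ (l : List (ℝ × ℝ)),
    (∀ v ∈ l, v = ((1 : ℝ), (0 : ℝ)) ∨ v = ((0 : ℝ), (1 : ℝ))) →
    ∃ a b : ℕ, a + b = l.length ∧ (((1 : ℝ), (0 : ℝ)) ∈ l → 1 ≤ a) ∧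
      (((0 : ℝ), (1 : ℝ)) ∈ l → 1 ≤ b) ∧
      l.Perm (List.replicate a ((1 : ℝ), (0 : ℝ)) ++ List.replicate b ((0 : ℝ), (1 : ℝ))) := by
  intro l
  induction l with
  | nil => exact fun _ => ⟨0, 0, by simp, by simp, by simp, by simp⟩
  | cons c l ih =>
    intro h
    obtain ⟨a, b, hab, ha, hb, hperm⟩ := ih (fun v hv => h v (List.mem_cons_of_mem c hv))
    rcases h c List.mem_cons_self with hc | hc
    · refine ⟨a + 1, b, by simp [← hab]; omega, fun _ => by omega, ?_, ?_⟩
      · intro hmem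
        rcases List.mem_cons.mp hmem with h' | h'
        · exact absurd (h'.trans hc) (Ne.symm e1_ne_e2)
        · exact hb h'
      · subst hc
        rw [List.replicate_succ, List.cons_append]
        exact hperm.cons _
    · refine ⟨a, b + 1, by simp [← hab]; omega, ?_, fun _ => by omega, ?_⟩
      · intro hmem
        rcases List.mem_cons.mp hmem with h' | h'
        · exact absurd (h'.trans hc) e1_ne_e2
        · exact ha h'
      · subst hc
        rw [List.replicate_succ]
        exact (hperm.cons _).trans List.perm_middle.symm

lemma iteratedDeriv_zero_fun : ∀ n : ℕ, iteratedDeriv n (fun _ : ℝ => (0 : ℝ)) = fun _ => 0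
  | 0 => by simp [iteratedDeriv_zero]
  | n + 1 => by
    rw [iteratedDeriv_succ, iteratedDeriv_zero_fun n]
    simp [deriv_const']

lemma iteratedDeriv_const_succ (m : ℕ) (c : ℝ) :
    iteratedDeriv (m + 1) (fun _ : ℝ => c) = fun _ => 0 := by
  rw [iteratedDeriv_succ', deriv_const']
  exact iteratedDeriv_zero_fun m

lemma opl_middle_zero {F : ℝ × ℝ → ℝ} (hF : ContDiff ℝ (⊤ : ℕ∞) F) {k : ℕ}
    (hmid : ∀ b : ℕ, 1 ≤ b → b < k → ∀ t : ℝ, iteratedDeriv b (fun s => F (t, s)) 0 = 0)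
    {l : List (ℝ × ℝ)} (hall : ∀ v ∈ l, v = ((1 : ℝ), (0 : ℝ)) ∨ v = ((0 : ℝ), (1 : ℝ)))
    (h1 : ((1 : ℝ), (0 : ℝ)) ∈ l) (h2 : ((0 : ℝ), (1 : ℝ)) ∈ l) (hlen : l.length ≤ k) (t : ℝ) :
    opl l F (t, 0) = 0 := by
  obtain ⟨a, b, hab, ha, hb, hperm⟩ := sort_perm l hall
  have ha1 := ha h1
  have hb1 := hb h2
  have hbk : b < k := by omega
  rw [opl_perm hF hperm, opl_append]
  rw [opl_replicate_e1 (contDiff_opl hF _) a (t, 0)]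
  have hzero : (fun u => opl (List.replicate b ((0 : ℝ), (1 : ℝ))) F (u, (0 : ℝ)))
      = fun _ => (0 : ℝ) := by
    funext u
    rw [opl_replicate_e2 hF b (u, 0)]
    exact hmid b hb1 hbk u
  rw [show ((t, (0 : ℝ)) : ℝ × ℝ).2 = (0 : ℝ) from rfl] at *
  rw [hzero, iteratedDeriv_zero_fun a]

lemma core {F : ℝ × ℝ → ℝ} (hF : ContDiff ℝ (⊤ : ℕ∞) F) {k : ℕ} (hk : 1 ≤ k)
    (hdiag : ∀ t : ℝ, F (t, t) = F (0, 0))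
    (hmid : ∀ b : ℕ, 1 ≤ b → b < k → ∀ t : ℝ, iteratedDeriv b (fun s => F (t, s)) 0 = 0)
    {j : ℕ} (hj1 : 1 ≤ j) (hjk : j ≤ k) :
    iteratedDeriv j (fun t => F (t, 0)) 0 = - iteratedDeriv j (fun s => F (0, s)) 0 := by
  classical
  have hne : Nonempty (Fin j) := ⟨⟨0, hj1⟩⟩
  -- the diagonal is constant, hence has vanishing j-th derivative
  have hdiag0 : iteratedDeriv j (fun t => F (t, t)) (0 : ℝ) = 0 := by
    have hconst : (fun t : ℝ => F (t, t)) = fun _ => F (0, 0) := funext hdiag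
    obtain ⟨m, rfl⟩ : ∃ m, j = m + 1 := ⟨j - 1, by omega⟩
    rw [hconst, iteratedDeriv_const_succ]
  -- express the diagonal derivative via iteratedFDeriv
  set D : ℝ →L[ℝ] ℝ × ℝ := (ContinuousLinearMap.id ℝ ℝ).prod (ContinuousLinearMap.id ℝ ℝ) with hD
  have hDcomp : (fun t : ℝ => F (t, t)) = F ∘ D := rfl
  have hdiagF : iteratedDeriv j (fun t => F (t, t)) (0 : ℝ)
      = iteratedFDeriv ℝ j F ((0 : ℝ), (0 : ℝ)) (fun _ => ((1 : ℝ), (1 : ℝ))) := by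
    rw [iteratedDeriv_eq_iteratedFDeriv, hDcomp,
      D.iteratedFDeriv_comp_right hF (0 : ℝ) (by exact_mod_cast le_top)]
    simp [ContinuousMultilinearMap.compContinuousLinearMap_apply, hD]
  -- multilinear expansion
  set Φ := iteratedFDeriv ℝ j F ((0 : ℝ), (0 : ℝ)) with hΦ
  have hsplit : (fun _ : Fin j => ((1 : ℝ), (1 : ℝ)))
      = (fun _ : Fin j => ((1 : ℝ), (0 : ℝ))) + fun _ : Fin j => ((0 : ℝ), (1 : ℝ)) := by
    funext i
    simp [Prod.ext_iff]
  set g : Finset (Fin j) → ℝ := fun s =>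
    Φ (s.piecewise (fun _ => ((1 : ℝ), (0 : ℝ))) fun _ => ((0 : ℝ), (1 : ℝ))) with hg
  have hexp : Φ (fun _ => ((1 : ℝ), (1 : ℝ))) = ∑ s : Finset (Fin j), g s := by
    rw [hsplit]
    exact Φ.toMultilinearMap.map_add_univ _ _
  -- middle terms vanish
  have hmidterm : ∀ s : Finset (Fin j), s ≠ Finset.univ → s ≠ ∅ → g s = 0 := by
    intro s hsu hse
    have := iteratedFDeriv_eq_opl j hF
      (s.piecewise (fun _ => ((1 : ℝ), (0 : ℝ))) fun _ => ((0 : ℝ), (1 : ℝ))) ((0 : ℝ), (0 : ℝ))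
    rw [hg]
    simp only []
    rw [this]
    refine opl_middle_zero hF hmid ?_ ?_ ?_ ?_ 0
    · intro v hv
      rw [List.mem_ofFn] at hv
      obtain ⟨i, rfl⟩ := hv
      by_cases hi : i ∈ s
      · left; simp [Finset.piecewise_eq_of_mem s _ _ hi]
      · right; simp [Finset.piecewise_eq_of_notMem s _ _ hi]
    · obtain ⟨i, hi⟩ := Finset.nonempty_of_ne_empty hse
      exact (List.mem_ofFn).mpr ⟨i, Finset.piecewise_eq_of_mem s _ _ hi⟩
    · obtain ⟨i, hi⟩ : ∃ i, i ∉ s := by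
        by_contra hcon
        push_neg at hcon
        exact hsu (Finset.eq_univ_iff_forall.mpr hcon)
      exact (List.mem_ofFn).mpr ⟨i, Finset.piecewise_eq_of_notMem s _ _ hi⟩
    · simp [hjk]
  -- the two extreme terms
  have huniv : g Finset.univ = iteratedDeriv j (fun t => F (t, 0)) 0 := by
    rw [hg]
    simp only [Finset.piecewise_univ]
    rw [iteratedFDeriv_eq_opl j hF _ ((0 : ℝ), (0 : ℝ)), List.ofFn_const,
      opl_replicate_e1 hF j ((0 : ℝ), (0 : ℝ))]
  have hempty : g ∅ = iteratedDeriv j (fun s => F (0, s)) 0 := by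
    rw [hg]
    simp only [Finset.piecewise_empty]
    rw [iteratedFDeriv_eq_opl j hF _ ((0 : ℝ), (0 : ℝ)), List.ofFn_const,
      opl_replicate_e2 hF j ((0 : ℝ), (0 : ℝ))]
  -- sum over all subsets reduces to the two extremes
  have hsum : ∑ s : Finset (Fin j), g s = g Finset.univ + g ∅ := by
    have hu_mem : (Finset.univ : Finset (Fin j)) ∈ (Finset.univ : Finset (Finset (Fin j))) :=
      Finset.mem_univ _
    have hne' : (∅ : Finset (Fin j)) ≠ Finset.univ := Finset.univ_nonempty.ne_empty.symm
    have he_mem : (∅ : Finset (Fin j))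
        ∈ (Finset.univ : Finset (Finset (Fin j))).erase Finset.univ :=
      Finset.mem_erase.mpr ⟨hne', Finset.mem_univ _⟩
    rw [← Finset.add_sum_erase _ g hu_mem, ← Finset.add_sum_erase _ g he_mem]
    have hrest : ∑ s ∈ ((Finset.univ : Finset (Finset (Fin j))).erase Finset.univ).erase ∅,
        g s = 0 := by
      refine Finset.sum_eq_zero fun s hs => ?_
      have h1 := Finset.mem_erase.mp hs
      have h2 := Finset.mem_erase.mp h1.2
      exact hmidterm s h2.1 h1.1
    rw [hrest, add_zero]
  have : (0 : ℝ) = iteratedDeriv j (fun t => F (t, 0)) 0 + iteratedDeriv j (fun s => F (0, s)) 0 := by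
    rw [← huniv, ← hempty, ← hsum, ← hexp, ← hdiagF, hdiag0]
  linarith

end InvCurveAux


noncomputable section

variable {E : Type*} [NormedAddCommGroup E] [NormedSpace ℝ E]
  {H : Type*} [TopologicalSpace H]

/-- If the curve of diffeomorphisms `φ` has first non-vanishing derivative
`k! • X` at `0`, then the inverse curve `t ↦ φ_t⁻¹` has first non-vanishing derivative
`-k! • X` at `0`. -/
theorem inverse_curve_first_nonvanishing_deriv
    {E : Type*} [NormedAddCommGroup E] [NormedSpace ℝ E] [FiniteDimensional ℝ E]
    {H : Type*} [TopologicalSpace H] {I : ModelWithCorners ℝ E H} [I.Boundaryless]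
    {M : Type*} [TopologicalSpace M] [ChartedSpace H M] [IsManifold I ((⊤ : ℕ∞) : WithTop ℕ∞) M]
    (φ : DiffeoCurve I M) (k : ℕ) (hk : 1 ≤ k)
    (X : ∀ x : M, TangentSpace I x) (hX : IsSmoothVectorField I X)
    (hφX : HasFirstNonvanishingDeriv φ k X)
    (f : M → ℝ) (hf : ContMDiff I 𝓘(ℝ, ℝ) (⊤ : ℕ∞) f) (x : M) :
    (∀ j : ℕ, 1 ≤ j → j < k →
      iteratedDeriv j (fun t => f (φ.invFun t x)) 0 = 0) ∧
    iteratedDeriv k (fun t => f (φ.invFun t x)) 0 =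
      -((k.factorial : ℝ) * dApply I f x (X x)) := by
  
  classical
  have hinv0 : ∀ y : M, φ.invFun 0 y = y := fun y => by
    have h := φ.right_inv 0 y
    rwa [φ.toFun_zero] at h
  set F : ℝ × ℝ → ℝ := fun p => f (φ.invFun p.1 (φ.toFun p.2 x)) with hFdef
  have hFsm : ContDiff ℝ (⊤ : ℕ∞) F := by
    have h1 : ContMDiff 𝓘(ℝ, ℝ × ℝ) (𝓘(ℝ, ℝ).prod I) (⊤ : ℕ∞) (fun p : ℝ × ℝ => (p.2, x)) :=
      (contDiff_snd.contMDiff).prodMk contMDiff_const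
    have h2 : ContMDiff 𝓘(ℝ, ℝ × ℝ) I (⊤ : ℕ∞) (fun p : ℝ × ℝ => φ.toFun p.2 x) :=
      φ.smooth_toFun.comp h1
    have h3 : ContMDiff 𝓘(ℝ, ℝ × ℝ) (𝓘(ℝ, ℝ).prod I) (⊤ : ℕ∞)
        (fun p : ℝ × ℝ => (p.1, φ.toFun p.2 x)) :=
      (contDiff_fst.contMDiff).prodMk h2
    have h4 : ContMDiff 𝓘(ℝ, ℝ × ℝ) I (⊤ : ℕ∞) (fun p : ℝ × ℝ => φ.invFun p.1 (φ.toFun p.2 x)) :=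
      φ.smooth_invFun.comp h3
    exact (hf.comp h4).contDiff
  have hdiag : ∀ t : ℝ, F (t, t) = F (0, 0) := by
    intro t
    simp only [hFdef]
    rw [φ.left_inv, φ.left_inv]
  have hmid : ∀ b : ℕ, 1 ≤ b → b < k → ∀ t : ℝ,
      iteratedDeriv b (fun s => F (t, s)) 0 = 0 := by
    intro b hb1 hbk t
    have hg : ContMDiff I 𝓘(ℝ, ℝ) (⊤ : ℕ∞) (fun y => f (φ.invFun t y)) := by
      have h1 : ContMDiff I (𝓘(ℝ, ℝ).prod I) (⊤ : ℕ∞) (fun y : M => ((t : ℝ), y)) :=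
        contMDiff_const.prodMk contMDiff_id
      exact hf.comp (φ.smooth_invFun.comp h1)
    exact (hφX x (fun y => f (φ.invFun t y)) hg).1 b hb1 hbk
  have hline1 : (fun t => F (t, 0)) = fun t => f (φ.invFun t x) := by
    funext t
    simp only [hFdef, φ.toFun_zero]
  have hline2 : (fun s => F (0, s)) = fun s => f (φ.toFun s x) := by
    funext s
    simp only [hFdef, hinv0]
  obtain ⟨hvanish, hkderiv⟩ := hφX x f hf
  constructor
  · intro j hj1 hjk
    have hc := InvCurveAux.core hFsm hk hdiag hmid hj1 (le_of_lt hjk)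
    rw [hline1, hline2] at hc
    rw [hc, hvanish j hj1 hjk, neg_zero]
  · have hc := InvCurveAux.core hFsm hk hdiag hmid hk le_rfl
    rw [hline1, hline2] at hc
    rw [hc, hkderiv]
end
end
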